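/- The Cesàro-type logarithmic mean (1/N)∑_{n=1}^N log(u_n/u_N) converges to 0 as N→∞ for every slowly varying sequence (u_n) of positive reals. -/

import Mathlib

open Filter MeasureTheory Set

lemma uct2 (w : ℕ → ℝ)
    (hw : ∀ a : ℝ, 0 < a → Tendsto (fun n : ℕ => w ⌊a * n⌋₊ - w n) atTop (nhds 0))
    {ε : ℝ} (hε : 0 < ε) :
    ∃ k : ℕ, 1 ≤ k ∧ ∀ n m : ℕ, k ≤ n → n ≤ m → m ≤ 2 * n → |w m - w n| ≤ ε := by
  classical
  set G : ℕ → Set ℝ := fun k => {a : ℝ | ∀ n : ℕ, k ≤ n → |w ⌊a * n⌋₊ - w n| ≤ ε/4} with hG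
  have hGmono : Monotone G := fun i j hij a ha n hn => ha n (le_trans hij hn)
  have hGmeas : ∀ k, MeasurableSet (G k) := by
    intro k
    have hEq : G k = ⋂ n : ℕ, {a : ℝ | k ≤ n → |w ⌊a * n⌋₊ - w n| ≤ ε/4} := by
      ext a; simp only [hG, Set.mem_iInter, Set.mem_setOf_eq]
    rw [hEq]
    refine MeasurableSet.iInter fun n => ?_
    by_cases hkn : k ≤ n
    · have hm : Measurable fun a : ℝ => |w ⌊a * (n:ℝ)⌋₊ - w n| :=
        ((measurable_from_top.comp (Nat.measurable_floor.comp
          (measurable_id.mul_const _))).sub measurable_const).abs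
      have h2 : {a : ℝ | k ≤ n → |w ⌊a * n⌋₊ - w n| ≤ ε/4}
          = (fun a : ℝ => |w ⌊a * (n:ℝ)⌋₊ - w n|) ⁻¹' (Iic (ε/4)) := by
        ext a; simp [hkn]
      rw [h2]; exact hm measurableSet_Iic
    · have h2 : {a : ℝ | k ≤ n → |w ⌊a * n⌋₊ - w n| ≤ ε/4} = univ := by
        ext a; simp [hkn]
      rw [h2]; exact MeasurableSet.univ
  have hcover : ∀ a : ℝ, 0 < a → ∃ k, a ∈ G k := by
    intro a ha
    have h1 : ∀ᶠ n : ℕ in atTop, |w ⌊a * n⌋₊ - w n| ≤ ε/4 := by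
      have := Metric.tendsto_nhds.mp (hw a ha) (ε/4) (by positivity)
      filter_upwards [this] with n hn
      rw [Real.dist_eq, sub_zero] at hn
      exact hn.le
    rcases eventually_atTop.mp h1 with ⟨k, hk⟩
    exact ⟨k, fun n hn => hk n hn⟩
  have key : ∀ b c t : ℝ, 2 ≤ b → b < c → t < c - b →
      ∃ k, ENNReal.ofReal t < volume (G k ∩ Icc b c) := by
    intro b c t hb hbc ht
    have hu : (⋃ k, G k ∩ Icc b c) = Icc b c := by
      apply Subset.antisymm (iUnion_subset fun k => inter_subset_right)
      intro a ha
      rcases hcover a (lt_of_lt_of_le (by norm_num : (0:ℝ) < 2) (hb.trans ha.1)) with ⟨k, hk⟩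
      exact mem_iUnion.mpr ⟨k, hk, ha⟩
    have hmon2 : Monotone (fun k => G k ∩ Icc b c) := fun i j hij =>
      inter_subset_inter_left _ (hGmono hij)
    have hdir : Directed (· ⊆ ·) (fun k => G k ∩ Icc b c) := hmon2.directed_le
    have hms : volume (⋃ k, G k ∩ Icc b c) = ⨆ k, volume (G k ∩ Icc b c) := hdir.measure_iUnion
    rw [hu, Real.volume_Icc] at hms
    have hlt : ENNReal.ofReal t < ⨆ k, volume (G k ∩ Icc b c) := by
      rw [← hms]
      exact (ENNReal.ofReal_lt_ofReal_iff (by linarith)).mpr ht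
    exact lt_iSup_iff.mp hlt
  obtain ⟨k₁, hk₁⟩ := key 2 9 (27/4) le_rfl (by norm_num) (by norm_num)
  obtain ⟨k₂, hk₂⟩ := key 2 4 (7/4) le_rfl (by norm_num) (by norm_num)
  set k₀ : ℕ := max 1 (max k₁ k₂) with hk₀
  have hA : ENNReal.ofReal (27/4) < volume (G k₀ ∩ Icc 2 9) :=
    lt_of_lt_of_le hk₁ (measure_mono (inter_subset_inter_left _
      (hGmono ((le_max_left k₁ k₂).trans (le_max_right 1 _)))))
  have hB : ENNReal.ofReal (7/4) < volume (G k₀ ∩ Icc 2 4) :=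
    lt_of_lt_of_le hk₂ (measure_mono (inter_subset_inter_left _
      (hGmono ((le_max_right k₁ k₂).trans (le_max_right 1 _)))))
  refine ⟨k₀, le_max_left 1 _, ?_⟩
  intro n m hn hnm hm2
  have hn1 : 1 ≤ n := (le_max_left 1 _).trans hn
  have hm1 : 1 ≤ m := hn1.trans hnm
  have hnR : (0:ℝ) < n := by exact_mod_cast hn1
  have hmR : (0:ℝ) < m := by exact_mod_cast hm1
  set 𝒦 : Finset ℕ := (Finset.Icc (2*m) (4*m)).filter
      (fun K => ∃ μ : ℝ, μ ∈ G k₀ ∩ Icc (2:ℝ) 4 ∧ ⌊μ * m⌋₊ = K) with h𝒦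
  by_cases hgood : ∃ K ∈ 𝒦, (G k₀ ∩ Icc (2:ℝ) 9 ∩ Ico ((K:ℝ)/n) (((K:ℝ)+1)/n)).Nonempty
  · obtain ⟨K, hK𝒦, lam, ⟨⟨hlG, _⟩, hlIco⟩⟩ := hgood
    obtain ⟨-, μ, ⟨hμG, hμI⟩, hμK⟩ := Finset.mem_filter.mp hK𝒦
    have hfl : ⌊lam * (n:ℝ)⌋₊ = K := by
      have h1 : (K:ℝ) ≤ lam * n := (div_le_iff₀ hnR).mp hlIco.1
      have h2 : lam * n < (K:ℝ) + 1 := (lt_div_iff₀ hnR).mp hlIco.2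
      rw [Nat.floor_eq_iff (le_trans (Nat.cast_nonneg K) h1)]
      exact ⟨h1, h2⟩
    have e1 : |w K - w n| ≤ ε/4 := by
      have := hlG n hn
      rwa [hfl] at this
    have e2 : |w K - w m| ≤ ε/4 := by
      have := hμG m (hn.trans hnm)
      rwa [hμK] at this
    calc |w m - w n| = |(w K - w n) - (w K - w m)| := by ring_nf
      _ ≤ |w K - w n| + |w K - w m| := abs_sub _ _
      _ ≤ ε/4 + ε/4 := add_le_add e1 e2
      _ ≤ ε := by linarith
  · exfalso
    push_neg at hgood
    have hempty : ∀ K ∈ 𝒦, G k₀ ∩ Icc (2:ℝ) 9 ∩ Ico ((K:ℝ)/n) (((K:ℝ)+1)/n) = ∅ := hgood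
    set D : Set ℝ := ⋃ K ∈ 𝒦, Ico ((K:ℝ)/n) (((K:ℝ)+1)/n) with hD
    have hFsub : G k₀ ∩ Icc (2:ℝ) 4 ⊆ ⋃ K ∈ 𝒦, Ico ((K:ℝ)/m) (((K:ℝ)+1)/m) := by
      intro μ hμ
      have hμ2 : (2:ℝ) ≤ μ := hμ.2.1
      have hμ4 : μ ≤ 4 := hμ.2.2
      have h2m : 2*m ≤ ⌊μ * (m:ℝ)⌋₊ := by
        apply Nat.le_floor
        push_cast
        nlinarith
      have h4m : ⌊μ * (m:ℝ)⌋₊ ≤ 4*m := by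
        have hle : μ * m ≤ ((4*m : ℕ):ℝ) := by push_cast; nlinarith
        calc ⌊μ * (m:ℝ)⌋₊ ≤ ⌊((4*m:ℕ):ℝ)⌋₊ := Nat.floor_le_floor hle
          _ = 4*m := Nat.floor_natCast _
      have hKmem : ⌊μ * (m:ℝ)⌋₊ ∈ 𝒦 := by
        rw [h𝒦, Finset.mem_filter]
        exact ⟨Finset.mem_Icc.mpr ⟨h2m, h4m⟩, μ, hμ, rfl⟩
      refine mem_biUnion hKmem ⟨?_, ?_⟩
      · rw [div_le_iff₀ hmR]
        exact Nat.floor_le (by positivity)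
      · rw [lt_div_iff₀ hmR]
        exact Nat.lt_floor_add_one _
    have hvolIco : ∀ (K : ℕ) (r : ℝ), 0 < r →
        volume (Ico ((K:ℝ)/r) (((K:ℝ)+1)/r)) = ENNReal.ofReal (1/r) := by
      intro K r hr
      rw [Real.volume_Ico]
      congr 1
      field_simp
      ring
    have hFvol : volume (G k₀ ∩ Icc (2:ℝ) 4) ≤ (𝒦.card : ENNReal) * ENNReal.ofReal (1/m) := by
      calc volume (G k₀ ∩ Icc (2:ℝ) 4)
          ≤ volume (⋃ K ∈ 𝒦, Ico ((K:ℝ)/m) (((K:ℝ)+1)/m)) := measure_mono hFsub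
        _ ≤ ∑ K ∈ 𝒦, volume (Ico ((K:ℝ)/m) (((K:ℝ)+1)/m)) := measure_biUnion_finset_le _ _
        _ = ∑ K ∈ 𝒦, ENNReal.ofReal (1/m) :=
            Finset.sum_congr rfl fun K _ => hvolIco K m hmR
        _ = (𝒦.card : ENNReal) * ENNReal.ofReal (1/m) := by
            rw [Finset.sum_const, nsmul_eq_mul]
    have hcard : (7/4 : ℝ) < (𝒦.card : ℝ) / m := by
      by_contra hcon
      push_neg at hcon
      have hle : volume (G k₀ ∩ Icc (2:ℝ) 4) ≤ ENNReal.ofReal (7/4) := by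
        refine le_trans hFvol ?_
        rw [← ENNReal.ofReal_natCast 𝒦.card, ← ENNReal.ofReal_mul (Nat.cast_nonneg _)]
        apply ENNReal.ofReal_le_ofReal
        rw [mul_one_div]
        exact hcon
      exact absurd (lt_of_lt_of_le hB hle) (lt_irrefl _)
    have hpair : (↑𝒦 : Set ℕ).PairwiseDisjoint
        (fun K : ℕ => Ico ((K:ℝ)/n) (((K:ℝ)+1)/n)) := by
      intro K _ K' _ hne
      rw [Function.onFun, Set.Ico_disjoint_Ico]
      rcases lt_or_gt_of_ne hne with h | h
      · calc min (((K:ℝ)+1)/n) (((K':ℝ)+1)/n) ≤ ((K:ℝ)+1)/n := min_le_left _ _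
          _ ≤ (K':ℝ)/n := by
              gcongr
              have : (K:ℕ)+1 ≤ K' := h
              exact_mod_cast this
          _ ≤ max ((K:ℝ)/n) ((K':ℝ)/n) := le_max_right _ _
      · calc min (((K:ℝ)+1)/n) (((K':ℝ)+1)/n) ≤ ((K':ℝ)+1)/n := min_le_right _ _
          _ ≤ (K:ℝ)/n := by
              gcongr
              have : (K':ℕ)+1 ≤ K := h
              exact_mod_cast this
          _ ≤ max ((K:ℝ)/n) ((K':ℝ)/n) := le_max_left _ _
    have hDvol : volume D = (𝒦.card : ENNReal) * ENNReal.ofReal (1/n) := by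
      rw [hD, measure_biUnion_finset hpair (fun K _ => measurableSet_Ico)]
      rw [Finset.sum_congr rfl (fun K _ => hvolIco K n hnR), Finset.sum_const, nsmul_eq_mul]
    have hDlow : ENNReal.ofReal (7/4) ≤ volume D := by
      rw [hDvol, ← ENNReal.ofReal_natCast 𝒦.card, ← ENNReal.ofReal_mul (Nat.cast_nonneg _)]
      apply ENNReal.ofReal_le_ofReal
      rw [mul_one_div]
      have hmn : (n:ℝ) ≤ m := by exact_mod_cast hnm
      have hdd : (𝒦.card:ℝ)/m ≤ (𝒦.card:ℝ)/n := by
        rw [div_le_div_iff₀ hmR hnR]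
        exact mul_le_mul_of_nonneg_left hmn (Nat.cast_nonneg _)
      linarith [hcard]
    have hDsub : D ⊆ Icc (2:ℝ) 9 := by
      rw [hD]
      refine iUnion₂_subset fun K hK => ?_
      obtain ⟨hKI, -⟩ := Finset.mem_filter.mp hK
      obtain ⟨hK2, hK4⟩ := Finset.mem_Icc.mp hKI
      intro x hx
      constructor
      · refine le_trans ?_ hx.1
        rw [le_div_iff₀ hnR]
        have h2n : 2*n ≤ K := le_trans (by omega) hK2
        exact_mod_cast h2n
      · refine le_of_lt (lt_of_lt_of_le hx.2 ?_)
        rw [div_le_iff₀ hnR]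
        have hK8 : K + 1 ≤ 9 * n := by omega
        exact_mod_cast hK8
    have hdisj : Disjoint D (G k₀ ∩ Icc (2:ℝ) 9) := by
      rw [Set.disjoint_left]
      rintro x hxD hxG
      rw [hD, mem_iUnion₂] at hxD
      obtain ⟨K, hK, hxK⟩ := hxD
      have hmem : x ∈ G k₀ ∩ Icc (2:ℝ) 9 ∩ Ico ((K:ℝ)/n) (((K:ℝ)+1)/n) := ⟨hxG, hxK⟩
      rw [hempty K hK] at hmem
      exact hmem
    have hunion : volume D + volume (G k₀ ∩ Icc (2:ℝ) 9) ≤ ENNReal.ofReal 7 := by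
      rw [← measure_union hdisj ((hGmeas k₀).inter measurableSet_Icc)]
      calc volume (D ∪ (G k₀ ∩ Icc 2 9)) ≤ volume (Icc (2:ℝ) 9) :=
            measure_mono (union_subset hDsub inter_subset_right)
        _ = ENNReal.ofReal 7 := by rw [Real.volume_Icc]; norm_num
    have hbig : ENNReal.ofReal (7/4) + ENNReal.ofReal (27/4)
        < volume D + volume (G k₀ ∩ Icc (2:ℝ) 9) := by
      calc ENNReal.ofReal (7/4) + ENNReal.ofReal (27/4)
          < ENNReal.ofReal (7/4) + volume (G k₀ ∩ Icc 2 9) :=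
            ENNReal.add_lt_add_left ENNReal.ofReal_ne_top hA
        _ ≤ volume D + volume (G k₀ ∩ Icc 2 9) := add_le_add_left hDlow _
    have hfin : ENNReal.ofReal (7/4) + ENNReal.ofReal (27/4) < ENNReal.ofReal 7 :=
      lt_of_lt_of_le hbig hunion
    rw [← ENNReal.ofReal_add (by norm_num) (by norm_num)] at hfin
    have := (ENNReal.ofReal_lt_ofReal_iff (by norm_num)).mp hfin
    norm_num at this


lemma pot (w : ℕ → ℝ) {ε : ℝ} (hε : 0 < ε) {k : ℕ} (hk : 1 ≤ k)
    (huct : ∀ n m : ℕ, k ≤ n → n ≤ m → m ≤ 2*n → |w m - w n| ≤ ε) :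
    ∀ n N : ℕ, k ≤ n → n ≤ N → |w N - w n| ≤ ε * (1 + 2 * Real.log ((N:ℝ)/n)) := by
  have main : ∀ d n N : ℕ, N - n ≤ d → k ≤ n → n ≤ N →
      |w N - w n| ≤ ε * (1 + 2 * Real.log ((N:ℝ)/n)) := by
    intro d
    induction d with
    | zero =>
        intro n N hd hkn hnN
        have hNn : N = n := le_antisymm (by omega) hnN
        have hn0 : (0:ℝ) < n := by
          have : 1 ≤ n := hk.trans hkn
          exact_mod_cast this
        rw [hNn, sub_self, abs_zero, div_self hn0.ne', Real.log_one]
        nlinarith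
    | succ d ih =>
        intro n N hd hkn hnN
        have hn1 : 1 ≤ n := hk.trans hkn
        have hnR : (0:ℝ) < n := by exact_mod_cast hn1
        have hNR : (0:ℝ) < N := by
          have : 1 ≤ N := hn1.trans hnN
          exact_mod_cast this
        have hlog0 : 0 ≤ Real.log ((N:ℝ)/n) := by
          apply Real.log_nonneg
          rw [le_div_iff₀ hnR]
          have : (n:ℝ) ≤ N := by exact_mod_cast hnN
          linarith
        by_cases h2 : N ≤ 2*n
        · have := huct n N hkn hnN h2
          nlinarith
        · push_neg at h2
          have h1 : |w (2*n) - w n| ≤ ε := huct n (2*n) hkn (by omega) (le_refl _)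
          have h2' := ih (2*n) N (by omega) (by omega) (by omega)
          have habs : |w N - w n| ≤ |w N - w (2*n)| + |w (2*n) - w n| := by
            calc |w N - w n| = |(w N - w (2*n)) + (w (2*n) - w n)| := by ring_nf
              _ ≤ _ := abs_add_le _ _
          have hlogeq : Real.log ((N:ℝ)/((2*n : ℕ):ℝ)) = Real.log ((N:ℝ)/n) - Real.log 2 := by
            push_cast
            rw [show (N:ℝ)/(2*(n:ℝ)) = ((N:ℝ)/n)/2 by rw [div_div, mul_comm]]
            rw [Real.log_div (by positivity) (by norm_num)]
          rw [hlogeq] at h2'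
          have hl2 : (0.6931471803 : ℝ) < Real.log 2 := Real.log_two_gt_d9
          nlinarith
  intro n N hkn hnN
  exact main (N - n) n N (le_refl _) hkn hnN

lemma log_fac (N : ℕ) : (N:ℝ) * Real.log N - N ≤ ∑ n ∈ Finset.Icc 1 N, Real.log n := by
  induction N with
  | zero => simp
  | succ N ih =>
      rw [Finset.sum_Icc_succ_top (by omega)]
      rcases Nat.eq_zero_or_pos N with h0 | hpos
      · subst h0; norm_num
      have hNR : (0:ℝ) < N := by exact_mod_cast hpos
      have hstep : Real.log ((N:ℝ)+1) - Real.log N ≤ 1/(N:ℝ) := by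
        rw [← Real.log_div (by positivity) hNR.ne']
        calc Real.log (((N:ℝ)+1)/N) ≤ ((N:ℝ)+1)/N - 1 :=
              Real.log_le_sub_one_of_pos (by positivity)
          _ = 1/(N:ℝ) := by field_simp; ring
      have hkey : ((N:ℝ)+1) * Real.log ((N:ℝ)+1) - ((N:ℝ)+1)
          ≤ ((N:ℝ) * Real.log N - N) + Real.log ((N:ℝ)+1) := by
        have h1 : (N:ℝ) * (Real.log ((N:ℝ)+1) - Real.log N) ≤ 1 := by
          calc (N:ℝ) * (Real.log ((N:ℝ)+1) - Real.log N) ≤ (N:ℝ) * (1/(N:ℝ)) := by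
                apply mul_le_mul_of_nonneg_left hstep (by positivity)
            _ = 1 := by field_simp
        nlinarith
      push_cast
      linarith

lemma sum_log_div_le (N : ℕ) (hN : 1 ≤ N) :
    ∑ n ∈ Finset.Icc 1 N, Real.log ((N:ℝ)/n) ≤ N := by
  have hNR : (0:ℝ) < N := by exact_mod_cast hN
  have h1 : ∑ n ∈ Finset.Icc 1 N, Real.log ((N:ℝ)/n)
      = (N:ℝ) * Real.log N - ∑ n ∈ Finset.Icc 1 N, Real.log n := by
    calc ∑ n ∈ Finset.Icc 1 N, Real.log ((N:ℝ)/n)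
        = ∑ n ∈ Finset.Icc 1 N, (Real.log N - Real.log n) := by
          refine Finset.sum_congr rfl fun n hn => ?_
          obtain ⟨hn1, -⟩ := Finset.mem_Icc.mp hn
          have : (0:ℝ) < n := by exact_mod_cast hn1
          exact Real.log_div hNR.ne' this.ne'
      _ = (N:ℝ) * Real.log N - ∑ n ∈ Finset.Icc 1 N, Real.log n := by
          rw [Finset.sum_sub_distrib, Finset.sum_const, Nat.card_Icc]
          simp [nsmul_eq_mul]
  rw [h1]
  linarith [log_fac N]

theorem stmt3 (u : ℕ → ℝ) (hpos : ∀ n, 0 < u n)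
    (hsv : ∀ α : ℝ, 0 < α →
      Tendsto (fun n : ℕ => u ⌊α * n⌋₊ / u n) atTop (nhds 1)) :
    Tendsto (fun N : ℕ => (1 / (N : ℝ)) * ∑ n ∈ Finset.Icc 1 N, Real.logb 2 (u n / u N))
      atTop (nhds 0) := by
  set w : ℕ → ℝ := fun n => Real.logb 2 (u n) with hwdef
  have hw : ∀ a : ℝ, 0 < a → Tendsto (fun n : ℕ => w ⌊a * n⌋₊ - w n) atTop (nhds 0) := by
    intro a ha
    have h0 := ((Real.continuousAt_log (one_ne_zero)).tendsto.comp (hsv a ha)).div_const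
      (Real.log 2)
    simp only [Function.comp_def, Real.log_one, zero_div] at h0
    refine h0.congr fun n => ?_
    show Real.log (u ⌊a * n⌋₊ / u n) / Real.log 2 = w ⌊a * n⌋₊ - w n
    rw [Real.log_div (hpos _).ne' (hpos _).ne', sub_div]
    rfl
  have hsummand : ∀ n N : ℕ, Real.logb 2 (u n / u N) = w n - w N := fun n N =>
    Real.logb_div (hpos _).ne' (hpos _).ne'
  rw [Metric.tendsto_atTop]
  intro η hη
  set ε : ℝ := η/8 with hεdef
  have hεpos : 0 < ε := by positivity
  obtain ⟨k, hk1, huct⟩ := uct2 w hw hεpos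
  have hpot := pot w hεpos hk1 huct
  set B : ℝ := ∑ n ∈ Finset.Ico 1 k, |w n| with hBdef
  set C₁ : ℝ := B + k * (|w k| + ε) with hC₁
  set C₂ : ℝ := 2 * ε * k with hC₂
  have hlogten : Tendsto (fun N : ℕ => C₁/(N:ℝ) + C₂ * (Real.log N / N)) atTop (nhds 0) := by
    have h1 : Tendsto (fun N : ℕ => C₁/(N:ℝ)) atTop (nhds 0) :=
      tendsto_const_div_atTop_nhds_zero_nat C₁
    have h2 : Tendsto (fun x : ℝ => Real.log x / x) atTop (nhds 0) :=
      Real.isLittleO_log_id_atTop.tendsto_div_nhds_zero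
    have h3 : Tendsto (fun N : ℕ => Real.log N / N) atTop (nhds 0) :=
      h2.comp tendsto_natCast_atTop_atTop
    have := h1.add (h3.const_mul C₂)
    simpa using this
  have hev1 : ∀ᶠ N : ℕ in atTop, C₁/(N:ℝ) + C₂ * (Real.log N / N) < η/2 :=
    hlogten.eventually (Iio_mem_nhds (by positivity))
  have hev2 : ∀ᶠ N : ℕ in atTop, k ≤ N := eventually_ge_atTop k
  obtain ⟨N₀, hN₀⟩ := eventually_atTop.mp (hev1.and hev2)
  refine ⟨N₀, fun N hNge => ?_⟩
  obtain ⟨hN1, hNk⟩ := hN₀ N hNge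
  have hN1' : 1 ≤ N := hk1.trans hNk
  have hNR : (0:ℝ) < N := by exact_mod_cast hN1'
  rw [Real.dist_eq, sub_zero]
  -- bound the sum
  have hsplit : ∑ n ∈ Finset.Icc 1 N, |w n - w N|
      = ∑ n ∈ Finset.Ico 1 k, |w n - w N| + ∑ n ∈ Finset.Ico k (N+1), |w n - w N| := by
    rw [← Finset.Ico_add_one_right_eq_Icc]
    rw [← Finset.sum_Ico_consecutive _ hk1 (by omega)]
  have hT1 : ∑ n ∈ Finset.Ico 1 k, |w n - w N| ≤ C₁ + C₂ * Real.log N := by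
    have hwN : |w N| ≤ |w k| + ε * (1 + 2 * Real.log ((N:ℝ)/k)) := by
      have := hpot k N (le_refl k) hNk
      calc |w N| = |w N - w k + w k| := by ring_nf
        _ ≤ |w N - w k| + |w k| := abs_add_le _ _
        _ ≤ ε * (1 + 2 * Real.log ((N:ℝ)/k)) + |w k| := by linarith
        _ = _ := by ring
    have hlogk : Real.log ((N:ℝ)/k) ≤ Real.log N := by
      apply Real.log_le_log (by positivity)
      rw [div_le_iff₀ (by exact_mod_cast hk1 : (0:ℝ) < k)]
      nlinarith [(by exact_mod_cast hk1 : (1:ℝ) ≤ k)]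
    have hlogN0 : 0 ≤ Real.log N := Real.log_natCast_nonneg N
    have hbound : ∀ n ∈ Finset.Ico 1 k, |w n - w N| ≤ |w n| + (|w k| + ε + 2*ε*Real.log N) := by
      intro n hn
      have h1 : |w n - w N| ≤ |w n| + |w N| := abs_sub _ _
      have h2 : |w N| ≤ |w k| + ε + 2*ε*Real.log N := by nlinarith
      linarith
    calc ∑ n ∈ Finset.Ico 1 k, |w n - w N|
        ≤ ∑ n ∈ Finset.Ico 1 k, (|w n| + (|w k| + ε + 2*ε*Real.log N)) :=
          Finset.sum_le_sum hbound
      _ = B + (Finset.Ico 1 k).card * (|w k| + ε + 2*ε*Real.log N) := by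
          rw [Finset.sum_add_distrib, Finset.sum_const, nsmul_eq_mul]
      _ ≤ B + k * (|w k| + ε + 2*ε*Real.log N) := by
          have hcard : ((Finset.Ico 1 k).card : ℝ) ≤ k := by
            rw [Nat.card_Ico]; exact_mod_cast Nat.sub_le k 1
          have hfac : 0 ≤ |w k| + ε + 2*ε*Real.log N := by positivity
          nlinarith
      _ = C₁ + C₂ * Real.log N := by rw [hC₁, hC₂]; ring
  have hT2 : ∑ n ∈ Finset.Ico k (N+1), |w n - w N| ≤ 3 * ε * N := by
    have hstep : ∀ n ∈ Finset.Ico k (N+1), |w n - w N| ≤ ε * (1 + 2 * Real.log ((N:ℝ)/n)) := by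
      intro n hn
      obtain ⟨hn1, hn2⟩ := Finset.mem_Ico.mp hn
      rw [abs_sub_comm]
      exact hpot n N hn1 (by omega)
    have hnonneg : ∀ n ∈ Finset.Icc 1 N, 0 ≤ ε * (1 + 2 * Real.log ((N:ℝ)/n)) := by
      intro n hn
      obtain ⟨hn1, hn2⟩ := Finset.mem_Icc.mp hn
      have h0 : 0 ≤ Real.log ((N:ℝ)/n) := by
        apply Real.log_nonneg
        rw [le_div_iff₀ (by exact_mod_cast hn1 : (0:ℝ) < n)]
        have : (n:ℝ) ≤ N := by exact_mod_cast hn2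
        linarith
      positivity
    calc ∑ n ∈ Finset.Ico k (N+1), |w n - w N|
        ≤ ∑ n ∈ Finset.Ico k (N+1), ε * (1 + 2 * Real.log ((N:ℝ)/n)) :=
          Finset.sum_le_sum hstep
      _ ≤ ∑ n ∈ Finset.Icc 1 N, ε * (1 + 2 * Real.log ((N:ℝ)/n)) := by
          apply Finset.sum_le_sum_of_subset_of_nonneg
          · rw [Finset.Ico_add_one_right_eq_Icc]
            exact Finset.Icc_subset_Icc_left hk1
          · intro n hn _; exact hnonneg n hn
      _ = ε * N + 2 * ε * ∑ n ∈ Finset.Icc 1 N, Real.log ((N:ℝ)/n) := by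
          calc ∑ n ∈ Finset.Icc 1 N, ε * (1 + 2 * Real.log ((N:ℝ)/n))
              = ∑ n ∈ Finset.Icc 1 N, (ε + 2 * ε * Real.log ((N:ℝ)/n)) :=
                Finset.sum_congr rfl fun n _ => by ring
            _ = ((Finset.Icc 1 N).card : ℝ) * ε
                + 2 * ε * ∑ n ∈ Finset.Icc 1 N, Real.log ((N:ℝ)/n) := by
                rw [Finset.sum_add_distrib, Finset.sum_const, nsmul_eq_mul, Finset.mul_sum]
            _ = ε * N + 2 * ε * ∑ n ∈ Finset.Icc 1 N, Real.log ((N:ℝ)/n) := by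
                rw [Nat.card_Icc, Nat.add_sub_cancel]
                ring
      _ ≤ ε * N + 2 * ε * N := by
          have := sum_log_div_le N hN1'
          nlinarith
      _ = 3 * ε * N := by ring
  -- put together
  have habs : |(1 / (N:ℝ)) * ∑ n ∈ Finset.Icc 1 N, Real.logb 2 (u n / u N)|
      ≤ (1/(N:ℝ)) * ∑ n ∈ Finset.Icc 1 N, |w n - w N| := by
    rw [abs_mul, abs_of_nonneg (by positivity : (0:ℝ) ≤ 1/(N:ℝ))]
    apply mul_le_mul_of_nonneg_left _ (by positivity)
    calc |∑ n ∈ Finset.Icc 1 N, Real.logb 2 (u n / u N)|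
        = |∑ n ∈ Finset.Icc 1 N, (w n - w N)| := by
          congr 1
          exact Finset.sum_congr rfl fun n _ => hsummand n N
      _ ≤ ∑ n ∈ Finset.Icc 1 N, |w n - w N| := Finset.abs_sum_le_sum_abs _ _
  calc |(1 / (N:ℝ)) * ∑ n ∈ Finset.Icc 1 N, Real.logb 2 (u n / u N)|
      ≤ (1/(N:ℝ)) * ∑ n ∈ Finset.Icc 1 N, |w n - w N| := habs
    _ = (1/(N:ℝ)) * (∑ n ∈ Finset.Ico 1 k, |w n - w N| + ∑ n ∈ Finset.Ico k (N+1), |w n - w N|) := by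
        rw [hsplit]
    _ ≤ (1/(N:ℝ)) * ((C₁ + C₂ * Real.log N) + 3 * ε * N) := by
        apply mul_le_mul_of_nonneg_left (add_le_add hT1 hT2) (by positivity)
    _ = (C₁/(N:ℝ) + C₂ * (Real.log N / N)) + 3 * ε := by
        field_simp
    _ < η/2 + 3 * ε := by linarith
    _ ≤ η := by rw [hεdef]; linarith
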